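/- arXiv:2506.07307 — 3 statements merged into one kernel-verified Lean document; each statement's English description precedes it below -/
import Mathlib

section
/- Let α, ε, σ be real numbers with ε ≠ 0 and α ≠ 0, and let m ≥ 1 be a natural number. Suppose γ : ℝ → ℝ × ℝ is a global solution of the generalized Duffing system, i.e., γ is differentiable and γ'(t) = (γ₂(t), -α γ₂(t) - ε γ₁(t)^m - σ γ₁(t)) for all t ∈ ℝ, where γ = (γ₁, γ₂). If there exists T > 0 such that γ(t + T) = γ(t) for all t ∈ ℝ, then γ is constant. In particular, the system has no limit cycles when α ≠ 0. -/
/-- The generalized Duffing system with `α ≠ 0` has no limit cycles: every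
periodic global solution is constant (Bendixson criterion, since the divergence
of the vector field is `-α ≠ 0`). -/
theorem duffing_no_limit_cycles (α ε σ : ℝ) (hα : α ≠ 0) (hε : ε ≠ 0)
    (m : ℕ) (hm : 1 ≤ m) (γ : ℝ → ℝ × ℝ)
    (hγ : ∀ t : ℝ, HasDerivAt γ
      ((γ t).2, -α * (γ t).2 - ε * (γ t).1 ^ m - σ * (γ t).1) t)
    (T : ℝ) (hT : 0 < T) (hper : ∀ t : ℝ, γ (t + T) = γ t) :
    ∀ s t : ℝ, γ s = γ t := by
  set x : ℝ → ℝ := fun t => (γ t).1 with hxdef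
  set y : ℝ → ℝ := fun t => (γ t).2 with hydef
  have hx : ∀ t, HasDerivAt x (y t) t := fun t => (hγ t).fst
  have hy : ∀ t, HasDerivAt y (-α * y t - ε * x t ^ m - σ * x t) t := fun t => (hγ t).snd
  set E : ℝ → ℝ := fun t =>
    α * ((y t) ^ 2 / 2 + ε * (x t) ^ (m + 1) / (m + 1) + σ * (x t) ^ 2 / 2) with hEdef
  have hm1 : ((m : ℝ) + 1) ≠ 0 := by positivity
  have hE : ∀ t, HasDerivAt E (-(α ^ 2 * (y t) ^ 2)) t := by
    intro t
    have h1 : HasDerivAt (fun t => (y t) ^ 2 / 2)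
        (2 * y t ^ 1 * (-α * y t - ε * x t ^ m - σ * x t) / 2) t :=
      ((hy t).pow 2).div_const 2
    have h2 : HasDerivAt (fun t => ε * (x t) ^ (m + 1) / (m + 1))
        (ε * ((m + 1 : ℕ) * x t ^ m * y t) / (m + 1)) t := by
      have := ((hx t).pow (m + 1)).const_mul ε
      simpa using this.div_const ((m : ℝ) + 1)
    have h3 : HasDerivAt (fun t => σ * (x t) ^ 2 / 2)
        (σ * (2 * x t ^ 1 * y t) / 2) t := (((hx t).pow 2).const_mul σ).div_const 2
    have h := (((h1.add h2).add h3).const_mul α)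
    refine h.congr_deriv ?_
    push_cast
    field_simp
    ring
  have hEanti : Antitone E := by
    apply antitone_of_deriv_nonpos
    · exact fun t => (hE t).differentiableAt
    · intro t
      rw [(hE t).deriv]
      have : (0:ℝ) ≤ α ^ 2 * (y t) ^ 2 := by positivity
      linarith
  have hEper : Function.Periodic E T := by
    intro t
    simp only [hEdef, hxdef, hydef, hper t]
  have hEconst : ∀ s t : ℝ, E s = E t := by
    have key : ∀ a b : ℝ, a ≤ b → E a = E b := by
      intro a b hab
      obtain ⟨n, hn⟩ := Archimedean.arch (b - a) hT
      have hab' : b ≤ a + n • T := by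
        have : (b - a) ≤ n • T := hn
        linarith [this]
      have hEa : E (a + n • T) = E a := by
        clear hn hab'
        induction n with
        | zero => simp
        | succ k ih =>
          have h : a + (k+1) • T = (a + k • T) + T := by
            simp [add_smul, one_smul]; ring
          rw [h, hEper, ih]
      have h1 : E b ≤ E a := hEanti hab
      have h2 : E (a + n • T) ≤ E b := hEanti hab'
      rw [hEa] at h2
      linarith
    intro s t
    rcases le_total s t with h | h
    · exact key s t h
    · exact (key t s h).symm
  have hy0 : ∀ t, y t = 0 := by
    intro t
    have hEeq : E = fun _ => E 0 := funext fun u => hEconst u 0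
    have hd0 : deriv E t = 0 := by rw [hEeq]; simp
    have hd : deriv E t = -(α ^ 2 * (y t) ^ 2) := (hE t).deriv
    have : α ^ 2 * (y t) ^ 2 = 0 := by linarith [hd0, hd.symm.trans hd0]
    have hα2 : α ^ 2 ≠ 0 := pow_ne_zero 2 hα
    have : (y t) ^ 2 = 0 := by
      rcases mul_eq_zero.mp this with h | h
      · exact absurd h hα2
      · exact h
    exact pow_eq_zero_iff (by norm_num) |>.mp this
  have hxconst : ∀ s t : ℝ, x s = x t := by
    apply is_const_of_deriv_eq_zero
    · intro t
      exact (hx t).differentiableAt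
    · intro t
      have := (hx t).deriv
      rw [this, hy0 t]
  intro s t
  have h1 : (γ s).1 = (γ t).1 := hxconst s t
  have h2 : (γ s).2 = (γ t).2 := (hy0 s).trans (hy0 t).symm
  exact Prod.ext h1 h2
end

section
/- Let ε, σ be real numbers with ε > 0 and σ > 0, and let m > 1 be an odd natural number. Then every global solution γ : ℝ → ℝ × ℝ of the system ẋ = y, ẏ = -εx^m - σx (i.e., γ differentiable with γ'(t) = (γ₂(t), -ε γ₁(t)^m - σ γ₁(t)) for all t) with γ(0) ≠ (0,0) is periodic: there exists T > 0 such that γ(t + T) = γ(t) for all t ∈ ℝ. That is, the origin is a global center. -/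
open Set Metric Real NNReal

private lemma duffing_lip (ε σ R : ℝ) (hR : 0 ≤ R) (m : ℕ) :
    ∃ K : ℝ≥0, LipschitzOnWith K
      (fun p : ℝ × ℝ => (p.2, -ε * p.1 ^ m - σ * p.1)) (closedBall (0 : ℝ × ℝ) R) := by
  set C : ℝ := |ε| * m * R ^ (m - 1) + |σ| with hC
  have hC0 : 0 ≤ C := by positivity
  refine ⟨Real.toNNReal (max 1 C), ?_⟩
  rw [lipschitzOnWith_iff_dist_le_mul]
  intro p hp q hq
  rw [mem_closedBall_zero_iff] at hp hq
  have hfun : ∀ x : ℝ, HasDerivAt (fun x : ℝ => -ε * x ^ m - σ * x)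
      (-ε * (m * x ^ (m - 1)) - σ) x := by
    intro x
    have h1 := (hasDerivAt_pow m x).const_mul (-ε)
    have h2 := (hasDerivAt_id x).const_mul σ
    have h3 := h1.sub h2
    rw [mul_one] at h3
    exact h3
  have hbound : ∀ x ∈ Icc (-R) R, ‖-ε * (m * x ^ (m - 1)) - σ‖ ≤ C := by
    intro x hx
    have hxR : |x| ≤ R := abs_le.2 ⟨hx.1, hx.2⟩
    have hpow : |x| ^ (m - 1) ≤ R ^ (m - 1) := pow_le_pow_left₀ (abs_nonneg x) hxR _
    calc ‖-ε * (m * x ^ (m - 1)) - σ‖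
        ≤ |(-ε) * (m * x ^ (m - 1))| + |σ| := abs_sub _ _
      _ = |ε| * (m * |x| ^ (m - 1)) + |σ| := by
          rw [abs_mul, abs_neg, abs_mul, abs_pow]
          simp [abs_of_nonneg (Nat.cast_nonneg (α := ℝ) m)]
      _ ≤ |ε| * (m * R ^ (m - 1)) + |σ| := by
          gcongr
      _ = C := by ring
  have hlip : ∀ x ∈ Icc (-R) R, ∀ y ∈ Icc (-R) R,
      dist (-ε * x ^ m - σ * x) (-ε * y ^ m - σ * y) ≤ C * dist x y := by
    intro x hx y hy
    have := (convex_Icc (-R) R).norm_image_sub_le_of_norm_hasDerivWithin_le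
      (f := fun x : ℝ => -ε * x ^ m - σ * x)
      (f' := fun x : ℝ => -ε * (m * x ^ (m - 1)) - σ)
      (fun z hz => (hfun z).hasDerivWithinAt) hbound hy hx
    simpa [dist_eq_norm] using this
  have hmem : ∀ p : ℝ × ℝ, ‖p‖ ≤ R → p.1 ∈ Icc (-R) R := by
    intro p hpn
    have : |p.1| ≤ R := le_trans (by simpa using norm_fst_le p) hpn
    exact abs_le.1 this
  have key : dist ((fun p : ℝ × ℝ => (p.2, -ε * p.1 ^ m - σ * p.1)) p)
      ((fun p : ℝ × ℝ => (p.2, -ε * p.1 ^ m - σ * p.1)) q) ≤ max 1 C * dist p q := by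
    rw [Prod.dist_eq]
    have h2 : dist p.2 q.2 ≤ dist p q := by rw [Prod.dist_eq]; exact le_max_right _ _
    have h1 : dist p.1 q.1 ≤ dist p q := by rw [Prod.dist_eq]; exact le_max_left _ _
    refine max_le ?_ ?_
    · calc dist p.2 q.2 ≤ 1 * dist p q := by linarith
        _ ≤ max 1 C * dist p q := by
            gcongr; exact le_max_left _ _
    · calc dist (-ε * p.1 ^ m - σ * p.1) (-ε * q.1 ^ m - σ * q.1)
          ≤ C * dist p.1 q.1 := hlip _ (hmem p hp) _ (hmem q hq)
        _ ≤ C * dist p q := by gcongr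
        _ ≤ max 1 C * dist p q := by gcongr; exact le_max_right _ _
  calc dist _ _ ≤ max 1 C * dist p q := key
    _ = Real.toNNReal (max 1 C) * dist p q := by
        rw [Real.coe_toNNReal _ (le_trans zero_le_one (le_max_left _ _))]

private lemma hasDerivAt_fst' {f : ℝ → ℝ × ℝ} {p : ℝ × ℝ} {t : ℝ}
    (hf : HasDerivAt f p t) : HasDerivAt (fun t => (f t).1) p.1 t := by
  exact ((ContinuousLinearMap.fst ℝ ℝ ℝ).hasFDerivAt).comp_hasDerivAt t hf

private lemma hasDerivAt_snd' {f : ℝ → ℝ × ℝ} {p : ℝ × ℝ} {t : ℝ}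
    (hf : HasDerivAt f p t) : HasDerivAt (fun t => (f t).2) p.2 t := by
  exact ((ContinuousLinearMap.snd ℝ ℝ ℝ).hasFDerivAt).comp_hasDerivAt t hf

private lemma duffing_reflect (ε σ : ℝ) (m : ℕ) (γ : ℝ → ℝ × ℝ)
    (hγ : ∀ t : ℝ, HasDerivAt γ ((γ t).2, -ε * (γ t).1 ^ m - σ * (γ t).1) t)
    {s : ℝ} (hs : (γ s).2 = 0) (t0 : ℝ) :
    γ (2 * s - t0) = ((γ t0).1, -(γ t0).2) := by
  have hcont : Continuous γ := by
    rw [continuous_iff_continuousAt]; exact fun t => (hγ t).continuousAt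
  set δ : ℝ → ℝ × ℝ := fun t => ((γ (2 * s - t)).1, -(γ (2 * s - t)).2) with hδdef
  have hδ : ∀ t : ℝ, HasDerivAt δ ((δ t).2, -ε * (δ t).1 ^ m - σ * (δ t).1) t := by
    intro t
    have h1 : HasDerivAt (fun u : ℝ => 2 * s - u) (-1) t := by
      have h0 := (hasDerivAt_const t (2 * s)).sub (hasDerivAt_id t)
      rw [zero_sub] at h0
      exact h0
    have h2 : HasDerivAt (fun u : ℝ => γ (2 * s - u))
        ((-1 : ℝ) • ((γ (2 * s - t)).2, -ε * (γ (2 * s - t)).1 ^ m - σ * (γ (2 * s - t)).1)) t :=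
      HasDerivAt.scomp t (hγ (2 * s - t)) h1
    have h3 := (hasDerivAt_fst' h2).prodMk (hasDerivAt_snd' h2).neg
    refine HasDerivAt.congr_deriv h3 ?_
    simp [hδdef, Prod.smul_mk]
    ring
  -- choose interval and bounds
  have hab : min s t0 - 1 < max s t0 + 1 := by
    have := min_le_max (a := s) (b := t0); linarith
  set a := min s t0 - 1
  set b := max s t0 + 1
  set A := min a (2 * s - b) with hA
  set B := max b (2 * s - a) with hB
  obtain ⟨R0, hR0⟩ := (isCompact_Icc (a := A) (b := B)).exists_bound_of_continuousOn
    hcont.continuousOn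
  set R := max R0 0 with hRdef
  have hRbound : ∀ u ∈ Icc A B, ‖γ u‖ ≤ R := fun u hu => (hR0 u hu).trans (le_max_left _ _)
  obtain ⟨K, hK⟩ := duffing_lip ε σ R (le_max_right _ _) m
  have hsub : ∀ u ∈ Ioo a b, u ∈ Icc A B := by
    intro u hu
    exact ⟨le_trans (min_le_left _ _) hu.1.le, le_trans hu.2.le (le_max_left _ _)⟩
  have hsub' : ∀ u ∈ Ioo a b, 2 * s - u ∈ Icc A B := by
    intro u hu
    constructor
    · calc A ≤ 2 * s - b := min_le_right _ _
        _ ≤ 2 * s - u := by linarith [hu.2]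
    · calc 2 * s - u ≤ 2 * s - a := by linarith [hu.1]
        _ ≤ B := le_max_right _ _
  have hδnorm : ∀ u : ℝ, ‖δ u‖ = ‖γ (2 * s - u)‖ := by
    intro u
    simp [hδdef, Prod.norm_def]
  have hsmem : s ∈ Ioo a b := by
    rw [Set.mem_Ioo]
    constructor
    · have h := min_le_left s t0
      simp only [a]; linarith
    · have h := le_max_left s t0
      simp only [b]; linarith
  have hkey : EqOn γ δ (Icc a b) := by
    apply ODE_solution_unique_of_mem_Icc
      (v := fun _ p => (p.2, -ε * p.1 ^ m - σ * p.1))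
      (s := fun _ => closedBall (0 : ℝ × ℝ) R) (fun _ _ => hK)
      (t₀ := s) hsmem
      hcont.continuousOn (fun u _ => hγ u)
      (fun u hu => mem_closedBall_zero_iff.2 (hRbound u (hsub u hu)))
      (by fun_prop) (fun u _ => hδ u)
      (fun u hu => mem_closedBall_zero_iff.2 ((hδnorm u) ▸ hRbound _ (hsub' u hu)))
      ?_
    · -- γ s = δ s
      have harg : 2 * s - s = s := by ring
      have : δ s = ((γ s).1, -(γ s).2) := by simp only [hδdef, harg]
      rw [this]
      exact Prod.ext rfl (by rw [hs]; simp)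
  have ht0 : t0 ∈ Icc a b := by
    constructor
    · simp only [a]; linarith [min_le_right s t0]
    · simp only [b]; linarith [le_max_right s t0]
  have := hkey ht0
  rw [hδdef] at this
  have h1 : (γ t0).1 = (γ (2 * s - t0)).1 := by rw [this]
  have h2 : (γ t0).2 = -(γ (2 * s - t0)).2 := by rw [this]
  ext
  · exact h1.symm
  · simp [h2]

private lemma duffing_zero (ε σ : ℝ) (hε : 0 < ε) (hσ : 0 < σ) (m : ℕ) (hodd : Odd m)
    (γ : ℝ → ℝ × ℝ)
    (hγ : ∀ t : ℝ, HasDerivAt γ ((γ t).2, -ε * (γ t).1 ^ m - σ * (γ t).1) t)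
    (a : ℝ) : ∃ s ∈ Icc a (a + π / min 1 σ), (γ s).2 = 0 := by
  set c := min 1 σ with hc
  have hc0 : 0 < c := lt_min one_pos hσ
  have hL : 0 < π / c := div_pos Real.pi_pos hc0
  by_contra h
  push_neg at h
  set θ : ℝ → ℝ := fun t => arctan ((γ t).1 / (γ t).2) with hθdef
  have hDer : ∀ t ∈ Icc a (a + π / c), HasDerivAt θ
      (((γ t).2 ^ 2 + σ * (γ t).1 ^ 2 + ε * (γ t).1 ^ (m + 1)) /
        ((γ t).1 ^ 2 + (γ t).2 ^ 2)) t := by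
    intro t ht
    have hy : (γ t).2 ≠ 0 := h t ht
    have hu := (hasDerivAt_fst' (hγ t)).div (hasDerivAt_snd' (hγ t)) hy
    have harc := (Real.hasDerivAt_arctan ((γ t).1 / (γ t).2)).comp t hu
    refine HasDerivAt.congr_deriv harc ?_
    have hy2 : (γ t).2 ^ 2 ≠ 0 := pow_ne_zero _ hy
    have hden : (γ t).1 ^ 2 + (γ t).2 ^ 2 ≠ 0 := by positivity
    have h1 : (1 : ℝ) + ((γ t).1 / (γ t).2) ^ 2 ≠ 0 := by positivity
    field_simp
    ring
  have hge : ∀ t ∈ Icc a (a + π / c),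
      c ≤ ((γ t).2 ^ 2 + σ * (γ t).1 ^ 2 + ε * (γ t).1 ^ (m + 1)) /
        ((γ t).1 ^ 2 + (γ t).2 ^ 2) := by
    intro t ht
    have hy : (γ t).2 ≠ 0 := h t ht
    have hdenpos : 0 < (γ t).1 ^ 2 + (γ t).2 ^ 2 := by positivity
    rw [le_div_iff₀ hdenpos]
    have hpow : 0 ≤ (γ t).1 ^ (m + 1) := (hodd.add_one).pow_nonneg _
    have h1 : c ≤ 1 := min_le_left _ _
    have h2 : c ≤ σ := min_le_right _ _
    nlinarith [sq_nonneg (γ t).1, sq_nonneg (γ t).2, mul_nonneg hε.le hpow]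
  have hcontθ : ContinuousOn θ (Icc a (a + π / c)) :=
    fun t ht => ((hDer t ht).continuousAt).continuousWithinAt
  have hdiffθ : DifferentiableOn ℝ θ (interior (Icc a (a + π / c))) := by
    rw [interior_Icc]
    exact fun t ht =>
      ((hDer t (Ioo_subset_Icc_self ht)).differentiableAt).differentiableWithinAt
  have hderivθ : ∀ t ∈ interior (Icc a (a + π / c)), c ≤ deriv θ t := by
    rw [interior_Icc]
    intro t ht
    rw [(hDer t (Ioo_subset_Icc_self ht)).deriv]
    exact hge t (Ioo_subset_Icc_self ht)
  have hkey := (convex_Icc a (a + π / c)).mul_sub_le_image_sub_of_le_deriv hcontθ hdiffθ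
    hderivθ a ⟨le_rfl, by linarith⟩ (a + π / c) ⟨by linarith, le_rfl⟩ (by linarith)
  have heq : c * (a + π / c - a) = π := by
    field_simp
    ring
  rw [heq] at hkey
  have hb1 : θ (a + π / c) < π / 2 := arctan_lt_pi_div_two _
  have hb2 : -(π / 2) < θ a := neg_pi_div_two_lt_arctan _
  linarith

/-- For odd `m > 1` with `ε, σ > 0`, the origin is a global center of the
undamped generalized Duffing system: every global solution not starting at the
origin is periodic. -/
theorem duffing_global_center_odd (ε σ : ℝ) (hε : 0 < ε) (hσ : 0 < σ)
    (m : ℕ) (hm : 1 < m) (hodd : Odd m) (γ : ℝ → ℝ × ℝ)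
    (hγ : ∀ t : ℝ, HasDerivAt γ
      ((γ t).2, -ε * (γ t).1 ^ m - σ * (γ t).1) t)
    (h0 : γ 0 ≠ (0, 0)) :
    ∃ T : ℝ, 0 < T ∧ ∀ t : ℝ, γ (t + T) = γ t := by
  obtain ⟨t1, ht1mem, ht1⟩ := duffing_zero ε σ hε hσ m hodd γ hγ 0
  obtain ⟨t2, ht2mem, ht2⟩ := duffing_zero ε σ hε hσ m hodd γ hγ (t1 + 1)
  have ht12 : t1 + 1 ≤ t2 := ht2mem.1
  refine ⟨2 * (t2 - t1), by linarith, ?_⟩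
  intro t
  have e1 : γ (2 * t1 - t) = ((γ t).1, -(γ t).2) := duffing_reflect ε σ m γ hγ ht1 t
  have e2 : γ (2 * t2 - (2 * t1 - t)) = ((γ (2 * t1 - t)).1, -(γ (2 * t1 - t)).2) :=
    duffing_reflect ε σ m γ hγ ht2 (2 * t1 - t)
  have harg : t + 2 * (t2 - t1) = 2 * t2 - (2 * t1 - t) := by ring
  rw [harg, e2, e1]
  simp
end

section
/- Let α, ε, σ be real numbers with ε ≠ 0, α = 0 and σ > 0, and let m > 1 be a natural number. Then there exists δ > 0 such that every global solution γ : ℝ → ℝ × ℝ of the system ẋ = y, ẏ = -εx^m - σx (i.e., γ differentiable with γ'(t) = (γ₂(t), -ε γ₁(t)^m - σ γ₁(t)) for all t) with 0 < ‖γ(0)‖ < δ is periodic, i.e., there exists T > 0 with γ(t + T) = γ(t) for all t ∈ ℝ. In other words, the origin is a center. -/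
open Set

/-- The Duffing vector field (with `α = 0`). -/
def duffV (ε σ : ℝ) (m : ℕ) : ℝ × ℝ → ℝ × ℝ :=
  fun p => (p.2, -ε * p.1 ^ m - σ * p.1)

lemma duff_hasDerivAt_fst {γ : ℝ → ℝ × ℝ} {v : ℝ × ℝ} {t : ℝ} (h : HasDerivAt γ v t) :
    HasDerivAt (fun s => (γ s).1) v.1 t := by
  exact (ContinuousLinearMap.fst ℝ ℝ ℝ).hasFDerivAt.comp_hasDerivAt t h

lemma duff_hasDerivAt_snd {γ : ℝ → ℝ × ℝ} {v : ℝ × ℝ} {t : ℝ} (h : HasDerivAt γ v t) :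
    HasDerivAt (fun s => (γ s).2) v.2 t := by
  exact (ContinuousLinearMap.snd ℝ ℝ ℝ).hasFDerivAt.comp_hasDerivAt t h

/-- mean-value type linear growth bound -/
lemma duff_grow {f f' : ℝ → ℝ} (hf : ∀ t, HasDerivAt f (f' t) t) {k a b : ℝ} (hab : a ≤ b)
    (hk : ∀ t ∈ Icc a b, k ≤ f' t) : f a + k * (b - a) ≤ f b := by
  have hg : ∀ t, HasDerivAt (fun t => f t - k * t) (f' t - k) t := fun t =>
    (hf t).sub (by simpa using (hasDerivAt_id t).const_mul k)
  have hmono : MonotoneOn (fun t => f t - k * t) (Icc a b) := by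
    apply monotoneOn_of_hasDerivWithinAt_nonneg (convex_Icc a b)
      (fun t _ => (hg t).continuousAt.continuousWithinAt)
      (fun t _ => (hg t).hasDerivWithinAt)
    intro t ht
    rw [interior_Icc] at ht
    have := hk t (Ioo_subset_Icc_self ht)
    linarith
  have := hmono (left_mem_Icc.2 hab) (right_mem_Icc.2 hab) hab
  simp only at this
  nlinarith

lemma duff_pow_lip {a b : ℝ} (ha : |a| ≤ 1) (hb : |b| ≤ 1) (m : ℕ) :
    |a ^ m - b ^ m| ≤ m * |a - b| := by
  induction m with
  | zero => simp
  | succ n ih =>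
    have key : a ^ (n+1) - b ^ (n+1) = a * (a ^ n - b ^ n) + (a - b) * b ^ n := by ring
    rw [key]
    refine (abs_add_le _ _).trans ?_
    rw [abs_mul, abs_mul, abs_pow]
    have h1 : |a| * |a ^ n - b ^ n| ≤ 1 * (n * |a - b|) :=
      mul_le_mul ha ih (abs_nonneg _) zero_le_one
    have h2 : |a - b| * |b| ^ n ≤ |a - b| * 1 :=
      mul_le_mul_of_nonneg_left (pow_le_one₀ (abs_nonneg _) hb) (abs_nonneg _)
    push_cast
    nlinarith [abs_nonneg (a - b)]




noncomputable def duffE (ε σ : ℝ) (m : ℕ) (p : ℝ × ℝ) : ℝ :=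
  p.2 ^ 2 / 2 + σ * p.1 ^ 2 / 2 + ε * p.1 ^ (m + 1) / (m + 1)

lemma duff_energy_const {ε σ : ℝ} {m : ℕ} {γ : ℝ → ℝ × ℝ}
    (hγ : ∀ t, HasDerivAt γ (duffV ε σ m (γ t)) t) (t : ℝ) :
    duffE ε σ m (γ t) = duffE ε σ m (γ 0) := by
  have hE : ∀ s, HasDerivAt (fun u => duffE ε σ m (γ u)) 0 s := by
    intro s
    have hx : HasDerivAt (fun u => (γ u).1) ((γ s).2) s := duff_hasDerivAt_fst (hγ s)
    have hy : HasDerivAt (fun u => (γ u).2) (-ε * (γ s).1 ^ m - σ * (γ s).1) s :=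
      duff_hasDerivAt_snd (hγ s)
    have h1 := ((hy.pow 2).div_const 2)
    have h2 := (((hx.pow 2).const_mul σ).div_const 2)
    have h3 := (((hx.pow (m+1)).const_mul ε).div_const ((m : ℝ) + 1))
    have hsum := (h1.add h2).add h3
    have hm1 : ((m : ℝ) + 1) ≠ 0 := by positivity
    have hD : (2:ℝ) * (γ s).2 ^ (2 - 1) * (-ε * (γ s).1 ^ m - σ * (γ s).1) / 2 +
        σ * ((2:ℝ) * (γ s).1 ^ (2 - 1) * (γ s).2) / 2 +
        ε * ((((m:ℝ) + 1)) * (γ s).1 ^ (m + 1 - 1) * (γ s).2) / ((m:ℝ) + 1) = 0 := by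
      simp only [Nat.add_sub_cancel]
      field_simp
      ring
    simp only [duffE]
    refine hsum.congr_deriv ?_
    rw [← hD]
    norm_num
  have : ∀ a b : ℝ, (fun u => duffE ε σ m (γ u)) a = (fun u => duffE ε σ m (γ u)) b :=
    is_const_of_deriv_eq_zero (fun s => (hE s).differentiableAt) (fun s => (hE s).deriv)
  exact this t 0

lemma duff_abs_eps_pow {ε r x : ℝ} {m : ℕ} (hr1 : r ≤ 1) (hm : 1 < m) (hx : |x| ≤ r) :
    |ε * x ^ m| ≤ |ε| * r * |x| := by
  have hr0 : 0 ≤ r := (abs_nonneg x).trans hx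
  obtain ⟨k, hk, hk1⟩ : ∃ k, m = k + 1 ∧ 1 ≤ k := ⟨m - 1, by omega, by omega⟩
  subst hk
  have hxm : |x| ^ k ≤ r := by
    calc |x| ^ k ≤ r ^ k := pow_le_pow_left₀ (abs_nonneg x) hx _
    _ ≤ r ^ 1 := pow_le_pow_of_le_one hr0 hr1 hk1
    _ = r := pow_one r
  calc |ε * x ^ (k + 1)| = |ε| * (|x| ^ k * |x|) := by
        rw [abs_mul, abs_pow, pow_succ]
  _ ≤ |ε| * (r * |x|) := by
        apply mul_le_mul_of_nonneg_left _ (abs_nonneg ε)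
        exact mul_le_mul_of_nonneg_right hxm (abs_nonneg x)
  _ = |ε| * r * |x| := by ring

lemma duff_key_ineq {ε σ r x y : ℝ} {m : ℕ} (hσ : 0 < σ) (hr1 : r ≤ 1)
    (hεr : |ε| * r ≤ σ / 4) (hm : 1 < m) (hx : |x| ≤ r) :
    σ * x ^ 2 / 4 ≤ duffE ε σ m (x, y) := by
  have hb : |ε * x ^ m| ≤ |ε| * r * |x| := duff_abs_eps_pow hr1 hm hx
  have h0 : |ε * x ^ (m + 1)| = |ε * x ^ m| * |x| := by
    rw [← abs_mul]; ring_nf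
  have hxx : |x| * |x| = x ^ 2 := by rw [abs_mul_abs_self]; ring
  have h1 : |ε * x ^ (m + 1)| ≤ σ / 4 * x ^ 2 := by
    rw [h0]
    nlinarith [abs_nonneg x, abs_nonneg (ε * x ^ m), sq_nonneg x]
  have hm1 : (1:ℝ) ≤ (m:ℝ) + 1 := by
    have : (0:ℝ) ≤ (m:ℝ) := Nat.cast_nonneg m
    linarith
  have h2 : |ε * x ^ (m + 1) / ((m:ℝ) + 1)| ≤ |ε * x ^ (m + 1)| := by
    rw [abs_div, abs_of_pos (by linarith : (0:ℝ) < (m:ℝ) + 1)]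
    exact div_le_self (abs_nonneg _) hm1
  have h3 := abs_le.1 (h2.trans h1)
  have hy : 0 ≤ y ^ 2 / 2 := by positivity
  simp only [duffE]
  nlinarith [h3.1]
open Set in
lemma duff_lip {ε σ : ℝ} {m : ℕ} (hσ : 0 < σ) :
    LipschitzOnWith (Real.toNNReal (1 + σ + |ε| * m)) (duffV ε σ m) {p : ℝ × ℝ | |p.1| ≤ 1} := by
  rw [lipschitzOnWith_iff_dist_le_mul]
  intro p hp q hq
  have hK : Real.toNNReal (1 + σ + |ε| * m) = (1 + σ + |ε| * m : ℝ) := by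
    rw [Real.coe_toNNReal]
    positivity
  rw [Prod.dist_eq, Prod.dist_eq]
  have hd1 : dist p.1 q.1 ≤ max (dist p.1 q.1) (dist p.2 q.2) := le_max_left _ _
  have hd2 : dist p.2 q.2 ≤ max (dist p.1 q.1) (dist p.2 q.2) := le_max_right _ _
  have hd0 : 0 ≤ max (dist p.1 q.1) (dist p.2 q.2) := le_trans dist_nonneg hd1
  rw [hK]
  apply max_le
  · simp only [duffV, Real.dist_eq]
    calc |p.2 - q.2| = dist p.2 q.2 := (Real.dist_eq _ _).symm
    _ ≤ max (dist p.1 q.1) (dist p.2 q.2) := hd2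
    _ ≤ (1 + σ + |ε| * m) * max (dist p.1 q.1) (dist p.2 q.2) := by
        nlinarith [mul_nonneg (show (0:ℝ) ≤ σ + |ε| * m by positivity) hd0]
  · simp only [duffV, Real.dist_eq]
    have hpow : |p.1 ^ m - q.1 ^ m| ≤ m * |p.1 - q.1| := duff_pow_lip hp hq m
    have key : -ε * p.1 ^ m - σ * p.1 - (-ε * q.1 ^ m - σ * q.1)
        = -(ε * (p.1 ^ m - q.1 ^ m)) - σ * (p.1 - q.1) := by ring
    rw [key]
    have habs : |(-(ε * (p.1 ^ m - q.1 ^ m)) - σ * (p.1 - q.1))|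
        ≤ |ε| * |p.1 ^ m - q.1 ^ m| + σ * |p.1 - q.1| := by
      have h := abs_sub (-(ε * (p.1 ^ m - q.1 ^ m))) (σ * (p.1 - q.1))
      rw [abs_neg, abs_mul, abs_mul, abs_of_pos hσ] at h
      exact h
    calc |(-(ε * (p.1 ^ m - q.1 ^ m)) - σ * (p.1 - q.1))|
        ≤ |ε| * |p.1 ^ m - q.1 ^ m| + σ * |p.1 - q.1| := habs
    _ ≤ |ε| * (m * |p.1 - q.1|) + σ * |p.1 - q.1| :=
          add_le_add_left (mul_le_mul_of_nonneg_left hpow (abs_nonneg ε)) _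
    _ = (σ + |ε| * m) * |p.1 - q.1| := by ring
    _ ≤ (1 + σ + |ε| * m) * max (dist p.1 q.1) (dist p.2 q.2) := by
          rw [← Real.dist_eq]
          have h1 : (σ + |ε| * m) ≤ (1 + σ + |ε| * m) := by linarith
          have h2 : (0:ℝ) ≤ σ + |ε| * m := by positivity
          nlinarith [dist_nonneg (x := p.1) (y := q.1), hd1]

open Set in
/-- Global uniqueness for solutions staying in the unit strip. -/
lemma duff_uniq {ε σ : ℝ} {m : ℕ} (hσ : 0 < σ) {f g : ℝ → ℝ × ℝ}
    (hf : ∀ t, HasDerivAt f (duffV ε σ m (f t)) t)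
    (hg : ∀ t, HasDerivAt g (duffV ε σ m (g t)) t)
    (hfb : ∀ t, |(f t).1| ≤ 1) (hgb : ∀ t, |(g t).1| ≤ 1)
    {t₁ : ℝ} (heq : f t₁ = g t₁) (t : ℝ) : f t = g t := by
  set a := min t t₁ - 1 with ha
  set b := max t t₁ + 1 with hb
  have hta : a ≤ t := by
    have := min_le_left t t₁
    simp only [ha]; linarith
  have htb : t ≤ b := by
    have := le_max_left t t₁
    simp only [hb]; linarith
  have ht₁ : t₁ ∈ Ioo a b := by
    constructor
    · have := min_le_right t t₁
      simp only [ha]; linarith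
    · have := le_max_right t t₁
      simp only [hb]; linarith
  have := ODE_solution_unique_of_mem_Icc
    (v := fun _ => duffV ε σ m) (s := fun _ => {p : ℝ × ℝ | |p.1| ≤ 1})
    (fun _ _ => duff_lip hσ) ht₁
    (fun s _ => (hf s).continuousAt.continuousWithinAt)
    (fun s _ => hf s) (fun s _ => hfb s)
    (fun s _ => (hg s).continuousAt.continuousWithinAt)
    (fun s _ => hg s) (fun s _ => hgb s) heq
  exact this ⟨hta, htb⟩

/-- Reversibility: reflecting at a time where `y = 0` is a symmetry of the orbit. -/
lemma duff_reflect {ε σ : ℝ} {m : ℕ} (hσ : 0 < σ) {γ : ℝ → ℝ × ℝ}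
    (hγ : ∀ t, HasDerivAt γ (duffV ε σ m (γ t)) t)
    (hb : ∀ t, |(γ t).1| ≤ 1) {t₁ : ℝ} (hy : (γ t₁).2 = 0) (t : ℝ) :
    γ (2 * t₁ - t) = ((γ t).1, -(γ t).2) := by
  set g : ℝ → ℝ × ℝ := fun s => ((γ (2 * t₁ - s)).1, -(γ (2 * t₁ - s)).2) with hgdef
  have hgsol : ∀ s, HasDerivAt g (duffV ε σ m (g s)) s := by
    intro s
    have hinner : HasDerivAt (fun u : ℝ => 2 * t₁ - u) (-1) s := by
      simpa using (hasDerivAt_id s).const_sub (2 * t₁)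
    have hcomp : HasDerivAt (fun u => γ (2 * t₁ - u))
        ((-1 : ℝ) • duffV ε σ m (γ (2 * t₁ - s))) s :=
      (hγ (2 * t₁ - s)).scomp s hinner
    have hx := duff_hasDerivAt_fst hcomp
    have hy2 := (duff_hasDerivAt_snd hcomp).neg
    have := hx.prodMk hy2
    refine this.congr_deriv ?_
    simp [duffV, hgdef]
    ring
  have h2t : 2 * t₁ - t₁ = t₁ := by ring
  have heq1 : γ t₁ = g t₁ := by
    rw [Prod.ext_iff]
    refine ⟨by simp only [hgdef, h2t], ?_⟩
    simp only [hgdef, h2t, hy]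
    norm_num
  have hgb : ∀ s, |(g s).1| ≤ 1 := fun s => hb _
  have h := duff_uniq hσ hγ hgsol hb hgb heq1 t
  have h1 := congrArg Prod.fst h
  have h2 := congrArg Prod.snd h
  simp only [hgdef] at h1 h2
  rw [Prod.ext_iff]
  constructor
  · exact h1.symm
  · dsimp only
    linarith
open Set in
lemma duff_confine_fwd {ε σ r : ℝ} {m : ℕ} (hσ : 0 < σ) (hr0 : 0 < r) (hr1 : r ≤ 1)
    (hεr : |ε| * r ≤ σ / 4) (hm : 1 < m) {γ : ℝ → ℝ × ℝ}
    (hγ : ∀ t, HasDerivAt γ (duffV ε σ m (γ t)) t)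
    (h0 : |(γ 0).1| < r) (hE0 : duffE ε σ m (γ 0) < σ * r ^ 2 / 4) :
    ∀ t ≥ 0, |(γ t).1| ≤ r := by
  by_contra hcon
  push_neg at hcon
  obtain ⟨t, ht0, htr⟩ := hcon
  have hγc : Continuous γ := continuous_iff_continuousAt.2 fun s => (hγ s).continuousAt
  have hxcont : Continuous fun s => |(γ s).1| := hγc.fst.abs
  set S : Set ℝ := Icc 0 t ∩ {s | r ≤ |(γ s).1|} with hS
  have hSne : S.Nonempty := ⟨t, ⟨ht0, le_refl t⟩, htr.le⟩
  have hScl : IsClosed S := isClosed_Icc.inter (isClosed_le continuous_const hxcont)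
  have hSbdd : BddBelow S := ⟨0, fun s hs => hs.1.1⟩
  set u := sInf S with hu
  have huS : u ∈ S := hScl.csInf_mem hSne hSbdd
  have hu0 : 0 < u := by
    rcases lt_or_eq_of_le huS.1.1 with h | h
    · exact h
    · exact absurd (h ▸ huS.2) (not_le.2 h0)
  have hub : ∀ s, 0 ≤ s → s < u → |(γ s).1| < r := by
    intro s hs0 hsu
    by_contra hsr
    push_neg at hsr
    have hsS : s ∈ S := ⟨⟨hs0, hsu.le.trans huS.1.2⟩, hsr⟩
    exact absurd (csInf_le hSbdd hsS) (not_le.2 hsu)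
  -- by continuity from the left, |x u| ≤ r
  have hxu_le : |(γ u).1| ≤ r := by
    have htend : Filter.Tendsto (fun s => |(γ s).1|) (nhdsWithin u (Iio u)) (nhds |(γ u).1|) :=
      (hxcont.tendsto u).mono_left nhdsWithin_le_nhds
    have hne : (nhdsWithin u (Iio u)).NeBot := by infer_instance
    refine le_of_tendsto htend ?_
    have hmem : Ioo 0 u ∈ nhdsWithin u (Iio u) := Ioo_mem_nhdsLT_of_mem ⟨hu0, le_refl u⟩
    filter_upwards [hmem] with s hs
    exact (hub s hs.1.le hs.2).le
  have hxu_ge : r ≤ |(γ u).1| := huS.2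
  have hkey : σ * (γ u).1 ^ 2 / 4 ≤ duffE ε σ m (γ u) :=
    duff_key_ineq hσ hr1 hεr hm hxu_le
  have hEu : duffE ε σ m (γ u) = duffE ε σ m (γ 0) := duff_energy_const hγ u
  have hr2 : r ^ 2 ≤ (γ u).1 ^ 2 := by
    have := sq_abs ((γ u).1)
    nlinarith [hxu_ge, hr0]
  nlinarith [hkey, hE0, hEu, hσ]
open Set in
/-- The vertical velocity cannot stay positive forever. -/
lemma duff_no_pos {ε σ r : ℝ} {m : ℕ} (hσ : 0 < σ) (hr0 : 0 < r) (hr1 : r ≤ 1)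
    (hεr : |ε| * r ≤ σ / 4) (hm : 1 < m) {γ : ℝ → ℝ × ℝ}
    (hγ : ∀ t, HasDerivAt γ (duffV ε σ m (γ t)) t)
    (hconf : ∀ t, |(γ t).1| ≤ r) {t₀ : ℝ}
    (hy : ∀ t ≥ t₀, 0 < (γ t).2) : False := by
  set x : ℝ → ℝ := fun t => (γ t).1 with hxdef
  set y : ℝ → ℝ := fun t => (γ t).2 with hydef
  have hx' : ∀ t, HasDerivAt x (y t) t := fun t => duff_hasDerivAt_fst (hγ t)
  have hy' : ∀ t, HasDerivAt y (-ε * (x t) ^ m - σ * (x t)) t :=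
    fun t => duff_hasDerivAt_snd (hγ t)
  by_cases hex : ∃ t₁ ≥ t₀, 0 ≤ x t₁
  · obtain ⟨t₁, ht₁, hx₁⟩ := hex
    -- x is strictly increasing on [t₀, ∞)
    have hsm : StrictMonoOn x (Ici t₀) := by
      apply strictMonoOn_of_hasDerivWithinAt_pos (convex_Ici t₀)
        (fun s _ => (hx' s).continuousAt.continuousWithinAt)
        (fun s _ => (hx' s).hasDerivWithinAt)
      intro s hs
      rw [interior_Ici] at hs
      exact hy s (le_of_lt hs)
    set c := x (t₁ + 1) with hcdef
    have hc : 0 < c := lt_of_le_of_lt hx₁ (hsm (by exact ht₁) (by simp only [mem_Ici]; linarith) (by linarith))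
    set k := σ / 2 * c with hkdef
    have hk : 0 < k := by positivity
    -- for all s ≥ t₁ + 1, the force bound holds
    have hforce : ∀ s, t₁ + 1 ≤ s → k ≤ ε * (x s) ^ m + σ * (x s) := by
      intro s hs
      have hxs : c ≤ x s := by
        rcases eq_or_lt_of_le hs with h | h
        · rw [← h]
        · exact (hsm (by simp only [mem_Ici]; linarith) (by simp only [mem_Ici]; linarith) h).le
      have hxr : |x s| ≤ r := hconf s
      have habs : |ε * (x s) ^ m| ≤ |ε| * r * |x s| := duff_abs_eps_pow hr1 hm hxr
      have hxpos : 0 < x s := lt_of_lt_of_le hc hxs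
      have habs2 : |x s| = x s := abs_of_pos hxpos
      have h1 := (abs_le.1 habs).1
      rw [habs2] at h1
      nlinarith [hεr, hxpos]
    -- y decreases linearly, contradiction
    set a := t₁ + 1 with hadef
    set b := a + (y a + 1) / k with hbdef
    have hya : 0 < y a := hy a (by simp only [hadef]; linarith)
    have hab : a ≤ b := by
      have : 0 < (y a + 1) / k := by positivity
      simp only [hbdef]; linarith
    have hgrow := duff_grow (f := fun t => -(y t)) (f' := fun t => ε * (x t) ^ m + σ * (x t))
      (fun t => by
        have h := (hy' t).neg
        refine h.congr_deriv ?_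
        ring) hab
      (fun s hs => hforce s (by exact hs.1))
    have hkb : k * (b - a) = y a + 1 := by
      simp only [hbdef]
      field_simp
      ring
    have hyb : y b ≤ -1 := by
      nlinarith [hgrow, hkb]
    have : 0 < y b := hy b (by simp only [hbdef, hadef]; nlinarith [div_nonneg (by linarith : (0:ℝ) ≤ y (t₁+1) + 1) hk.le])
    linarith
  · push_neg at hex
    -- x stays negative; then y is increasing, and x escapes to the right
    have hy'pos : ∀ s, t₀ ≤ s → 0 ≤ -ε * (x s) ^ m - σ * (x s) := by
      intro s hs
      have hxs := hex s hs
      have hxr : |x s| ≤ r := hconf s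
      have habs : |ε * (x s) ^ m| ≤ |ε| * r * |x s| := duff_abs_eps_pow hr1 hm hxr
      have habs2 : |x s| = -(x s) := abs_of_neg hxs
      have h1 := (abs_le.1 habs).2
      rw [habs2] at h1
      nlinarith [hεr, hxs]
    have hymono : MonotoneOn y (Ici t₀) := by
      apply monotoneOn_of_hasDerivWithinAt_nonneg (convex_Ici t₀)
        (fun s _ => (hy' s).continuousAt.continuousWithinAt)
        (fun s _ => (hy' s).hasDerivWithinAt)
      intro s hs
      rw [interior_Ici] at hs
      exact hy'pos s hs.le
    set d := y t₀ with hddef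
    have hd : 0 < d := hy t₀ le_rfl
    set b := t₀ + (r + 1) / d with hbdef
    have hab : t₀ ≤ b := by
      have : 0 < (r + 1) / d := by positivity
      simp only [hbdef]; linarith
    have hgrow := duff_grow (f := x) (f' := y) hx' hab
      (fun s hs => hymono (self_mem_Ici) (mem_Ici.2 hs.1) hs.1)
    have hxt₀ : -r ≤ x t₀ := (abs_le.1 (hconf t₀)).1
    have hdb : d * (b - t₀) = r + 1 := by
      simp only [hbdef]
      field_simp
      ring
    have hxb : 1 ≤ x b := by nlinarith [hgrow, hdb, hxt₀]
    have : x b < 0 := hex b hab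
    linarith

open Set in
/-- the vertical velocity vanishes at some time after `t₀` -/
lemma duff_exists_zero {ε σ r : ℝ} {m : ℕ} (hσ : 0 < σ) (hr0 : 0 < r) (hr1 : r ≤ 1)
    (hεr : |ε| * r ≤ σ / 4) (hm : 1 < m) {γ : ℝ → ℝ × ℝ}
    (hγ : ∀ t, HasDerivAt γ (duffV ε σ m (γ t)) t)
    (hconf : ∀ t, |(γ t).1| ≤ r) (t₀ : ℝ) :
    ∃ t ≥ t₀, (γ t).2 = 0 := by
  by_contra hno
  push_neg at hno
  have hycont : Continuous fun s => (γ s).2 :=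
    (continuous_iff_continuousAt.2 fun s => (hγ s).continuousAt).snd
  rcases lt_trichotomy ((γ t₀).2) 0 with h0 | h0 | h0
  · -- y < 0 throughout; apply no_pos to the point-reflected solution
    have hneg : ∀ t ≥ t₀, (γ t).2 < 0 := by
      intro t ht
      by_contra hpos
      push_neg at hpos
      have hpos' : 0 < (γ t).2 := lt_of_le_of_ne hpos (fun h => hno t ht h.symm)
      have hsub : Icc ((γ t₀).2) ((γ t).2) ⊆ (fun s => (γ s).2) '' Icc t₀ t :=
        intermediate_value_Icc ht hycont.continuousOn
      obtain ⟨s, hs, hs0⟩ := hsub ⟨h0.le, hpos'.le⟩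
      exact hno s hs.1 hs0
    set ε' := -ε * (-1:ℝ) ^ m with hε'
    set ζ : ℝ → ℝ × ℝ := fun t => (-(γ t).1, -(γ t).2) with hζ
    have h11 : ((-1:ℝ)) ^ m * ((-1:ℝ)) ^ m = 1 := by
      rw [← mul_pow]; norm_num
    have hkey : ∀ z : ℝ, -ε' * (-z) ^ m - σ * (-z) = -(-ε * z ^ m - σ * z) := by
      intro z
      rw [hε', neg_pow z m]
      linear_combination (ε * z ^ m) * h11
    have hζsol : ∀ t, HasDerivAt ζ (duffV ε' σ m (ζ t)) t := by
      intro t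
      have h := ((duff_hasDerivAt_fst (hγ t)).neg).prodMk ((duff_hasDerivAt_snd (hγ t)).neg)
      refine h.congr_deriv ?_
      simp only [duffV, hζ, Prod.mk.injEq]
      refine ⟨trivial, ?_⟩
      rw [hkey]
    have hε'r : |ε'| * r ≤ σ / 4 := by
      have : |ε'| = |ε| := by
        rw [hε', abs_mul, abs_neg, abs_pow, abs_neg, abs_one, one_pow, mul_one]
      rw [this]; exact hεr
    have hζconf : ∀ t, |(ζ t).1| ≤ r := by
      intro t
      simpa only [hζ, abs_neg] using hconf t
    have hζpos : ∀ t, t ≥ t₀ → 0 < (ζ t).2 := by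
      intro t ht
      simp only [hζ]
      exact neg_pos.2 (hneg t ht)
    exact duff_no_pos hσ hr0 hr1 hε'r hm hζsol hζconf hζpos
  · exact hno t₀ le_rfl h0
  · have hpos : ∀ t ≥ t₀, 0 < (γ t).2 := by
      intro t ht
      by_contra hneg
      push_neg at hneg
      have hneg' : (γ t).2 < 0 := lt_of_le_of_ne hneg (hno t ht)
      have hsub : Icc ((γ t).2) ((γ t₀).2) ⊆ (fun s => (γ s).2) '' Icc t₀ t :=
        intermediate_value_Icc' ht (hycont.continuousOn)
      obtain ⟨s, hs, hs0⟩ := hsub ⟨hneg'.le, h0.le⟩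
      exact hno s hs.1 hs0
    exact duff_no_pos hσ hr0 hr1 hεr hm hγ hconf hpos
set_option maxHeartbeats 1000000 in
/-- For `m > 1`, `α = 0` and `σ > 0`, the origin is a center of the
generalized Duffing system: all sufficiently small nontrivial global solutions
are periodic. -/
theorem duffing_center (α ε σ : ℝ) (hε : ε ≠ 0) (hα : α = 0) (hσ : 0 < σ)
    (m : ℕ) (hm : 1 < m) :
    ∃ δ : ℝ, 0 < δ ∧ ∀ γ : ℝ → ℝ × ℝ,
      (∀ t : ℝ, HasDerivAt γ
        ((γ t).2, -ε * (γ t).1 ^ m - σ * (γ t).1) t) →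
      0 < ‖γ 0‖ → ‖γ 0‖ < δ →
      ∃ T : ℝ, 0 < T ∧ ∀ t : ℝ, γ (t + T) = γ t := by
  set r := min 1 (σ / (4 * (|ε| + 1))) with hrdef
  have hr0 : 0 < r := lt_min one_pos (by positivity)
  have hr1 : r ≤ 1 := min_le_left _ _
  have hεr : |ε| * r ≤ σ / 4 := by
    have h2 : r ≤ σ / (4 * (|ε| + 1)) := min_le_right _ _
    have h3 : |ε| * r ≤ |ε| * (σ / (4 * (|ε| + 1))) :=
      mul_le_mul_of_nonneg_left h2 (abs_nonneg ε)
    have hD : (0:ℝ) < 4 * (|ε| + 1) := by positivity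
    have h4 : |ε| * (σ / (4 * (|ε| + 1))) ≤ σ / 4 := by
      rw [mul_div_assoc', div_le_div_iff₀ hD (by norm_num : (0:ℝ) < 4)]
      nlinarith [abs_nonneg ε, hσ]
    linarith
  set C := 1/2 + σ/2 + |ε| with hC
  have hC0 : 0 < C := by positivity
  set A := σ * r ^ 2 / 4 / C with hA
  have hA0 : 0 < A := by positivity
  refine ⟨min r (Real.sqrt A), lt_min hr0 (Real.sqrt_pos.2 hA0), ?_⟩
  intro γ hsol hn0 hnδ
  have hsol' : ∀ t, HasDerivAt γ (duffV ε σ m (γ t)) t := fun t => hsol t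
  have hnr : ‖γ 0‖ < r := hnδ.trans_le (min_le_left _ _)
  have hnA : ‖γ 0‖ < Real.sqrt A := hnδ.trans_le (min_le_right _ _)
  have hx0 : |(γ 0).1| ≤ ‖γ 0‖ := by
    rw [← Real.norm_eq_abs]; exact norm_fst_le _
  have hy0 : |(γ 0).2| ≤ ‖γ 0‖ := by
    rw [← Real.norm_eq_abs]; exact norm_snd_le _
  have hx0r : |(γ 0).1| < r := lt_of_le_of_lt hx0 hnr
  -- initial energy is small
  have hE0 : duffE ε σ m (γ 0) < σ * r ^ 2 / 4 := by
    have hb : ‖γ 0‖ ^ 2 < A := by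
      have hs := Real.sq_sqrt hA0.le
      nlinarith [norm_nonneg (γ 0), hnA, Real.sqrt_nonneg A]
    have h1 : (γ 0).2 ^ 2 ≤ ‖γ 0‖ ^ 2 := by
      nlinarith [sq_abs ((γ 0).2), hy0, abs_nonneg ((γ 0).2), norm_nonneg (γ 0)]
    have h2 : (γ 0).1 ^ 2 ≤ ‖γ 0‖ ^ 2 := by
      nlinarith [sq_abs ((γ 0).1), hx0, abs_nonneg ((γ 0).1), norm_nonneg (γ 0)]
    have hx1 : |(γ 0).1| ≤ 1 := hx0.trans (hnr.le.trans hr1)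
    have hp : |(γ 0).1| ^ (m + 1) ≤ |(γ 0).1| ^ 2 :=
      pow_le_pow_of_le_one (abs_nonneg _) hx1 (by omega)
    have hm1 : (1:ℝ) ≤ (m:ℝ) + 1 := by
      have : (0:ℝ) ≤ (m:ℝ) := Nat.cast_nonneg m
      linarith
    have hdiv : |ε * (γ 0).1 ^ (m + 1) / ((m:ℝ) + 1)| ≤ |ε * (γ 0).1 ^ (m + 1)| := by
      rw [abs_div, abs_of_pos (by linarith : (0:ℝ) < (m:ℝ) + 1)]
      exact div_le_self (abs_nonneg _) hm1
    have heq : |ε * (γ 0).1 ^ (m + 1)| = |ε| * |(γ 0).1| ^ (m + 1) := by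
      rw [abs_mul, abs_pow]
    have h3 : |ε * (γ 0).1 ^ (m + 1) / ((m:ℝ) + 1)| ≤ |ε| * ‖γ 0‖ ^ 2 := by
      refine hdiv.trans ?_
      rw [heq]
      have hxsq : |(γ 0).1| ^ 2 ≤ ‖γ 0‖ ^ 2 := by
        rw [sq_abs]; exact h2
      have := hp.trans hxsq
      exact mul_le_mul_of_nonneg_left this (abs_nonneg ε)
    have hfromabs := (abs_le.1 h3).2
    have hCA : C * A = σ * r ^ 2 / 4 := by
      rw [hA]; field_simp
    have e2 : σ * (γ 0).1 ^ 2 ≤ σ * ‖γ 0‖ ^ 2 := mul_le_mul_of_nonneg_left h2 hσ.le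
    have hle : duffE ε σ m (γ 0) ≤ C * ‖γ 0‖ ^ 2 := by
      simp only [duffE, hC]
      linarith [h1, e2, hfromabs]
    have hlt : C * ‖γ 0‖ ^ 2 < C * A := mul_lt_mul_of_pos_left hb hC0
    calc duffE ε σ m (γ 0) ≤ C * ‖γ 0‖ ^ 2 := hle
    _ < C * A := hlt
    _ = σ * r ^ 2 / 4 := hCA
  -- confinement for positive times
  have hfwd := duff_confine_fwd hσ hr0 hr1 hεr hm hsol' hx0r hE0
  -- confinement for negative times, via the reversed solution
  set η : ℝ → ℝ × ℝ := fun s => ((γ (-s)).1, -(γ (-s)).2) with hη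
  have hηsol : ∀ s, HasDerivAt η (duffV ε σ m (η s)) s := by
    intro s
    have hinner : HasDerivAt (fun u : ℝ => -u) (-1:ℝ) s := by
      simpa using hasDerivAt_neg s
    have hcomp : HasDerivAt (fun u => γ (-u))
        ((-1 : ℝ) • duffV ε σ m (γ (-s))) s :=
      (hsol' (-s)).scomp s hinner
    have h := (duff_hasDerivAt_fst hcomp).prodMk (duff_hasDerivAt_snd hcomp).neg
    refine h.congr_deriv ?_
    simp [duffV, hη]
    ring
  have hη0 : |(η 0).1| < r := by
    simpa [hη] using hx0r
  have hηE : duffE ε σ m (η 0) < σ * r ^ 2 / 4 := by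
    have : duffE ε σ m (η 0) = duffE ε σ m (γ 0) := by
      simp [hη, duffE]
    rw [this]; exact hE0
  have hbwd := duff_confine_fwd hσ hr0 hr1 hεr hm hηsol hη0 hηE
  have hconf : ∀ t, |(γ t).1| ≤ r := by
    intro t
    rcases le_or_gt 0 t with h | h
    · exact hfwd t h
    · have := hbwd (-t) (by linarith)
      simpa [hη] using this
  have hb1 : ∀ t, |(γ t).1| ≤ 1 := fun t => (hconf t).trans hr1
  obtain ⟨t₁, ht₁0, hy₁⟩ := duff_exists_zero hσ hr0 hr1 hεr hm hsol' hconf 0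
  obtain ⟨t₂, ht₂, hy₂⟩ := duff_exists_zero hσ hr0 hr1 hεr hm hsol' hconf (t₁ + 1)
  have hR1 := duff_reflect hσ hsol' hb1 hy₁
  have hR2 := duff_reflect hσ hsol' hb1 hy₂
  refine ⟨2 * (t₂ - t₁), by linarith, ?_⟩
  intro t
  have e1 : t + 2 * (t₂ - t₁) = 2 * t₂ - (2 * t₁ - t) := by ring
  calc γ (t + 2 * (t₂ - t₁)) = γ (2 * t₂ - (2 * t₁ - t)) := by rw [e1]
  _ = ((γ (2 * t₁ - t)).1, -(γ (2 * t₁ - t)).2) := hR2 _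
  _ = γ t := by rw [hR1 t]; simp
end
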